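/- Write vectors of ℝ⁶ as pairs (u, u*) with u, u* ∈ ℝ³ and equip ℝ⁶ with the bilinear form ⟨(u,u*),(u',u'')⟩ = uᵀu'' + (u*)ᵀu' of signature (3,3). Fix α ∈ ℝ, α ≠ 0. For j = 1, …, r let vⱼ = (uⱼ, uⱼ*) ∈ ℝ⁶, let Aⱼ : ℝ⁶ → ℝ⁶ be the linear map (u, u*) ↦ (α·(uⱼ* × u*), 0), and let γⱼ : x ↦ x + Aⱼx + vⱼ; also let τ₁, …, τ_l be translations by vectors in U = ℝ³ × {0}. Then each γⱼ and each τᵢ is an isometry of the form, and the centralizer of the group Γ generated by γ₁, …, γ_r, τ₁, …, τ_l in the isometry group of the form acts transitively on ℝ⁶; consequently Γ acts freely on ℝ⁶. -/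
import Mathlib


open Matrix

noncomputable section

/-- Vectors of `ℝ⁶` written as pairs `(u, u*)` with `u, u* ∈ ℝ³`. -/
abbrev V18 := (Fin 3 → ℝ) × (Fin 3 → ℝ)

/-- The bilinear form `⟨(u,u*),(u',u'')⟩ = uᵀu'' + (u*)ᵀu'` of signature `(3,3)`. -/
def form18 (x y : V18) : ℝ := x.1 ⬝ᵥ y.2 + x.2 ⬝ᵥ y.1

/-- The linear map `A : (u, u*) ↦ (α (uⱼ* × u*), 0)`. -/
def A18 (α : ℝ) (us : Fin 3 → ℝ) : V18 →ₗ[ℝ] V18 where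
  toFun x := (α • (crossProduct us x.2), 0)
  map_add' a b := by
    simp [Prod.ext_iff, smul_add]
  map_smul' r a := by
    simp [Prod.ext_iff, smul_comm r α]

lemma A18_sq (α : ℝ) (us : Fin 3 → ℝ) (x : V18) :
    A18 α us (A18 α us x) = 0 := by
  simp [A18, Prod.ext_iff]

/-- The linear equivalence `I + A`. -/
def L18 (α : ℝ) (us : Fin 3 → ℝ) : V18 ≃ₗ[ℝ] V18 :=
  LinearEquiv.ofLinear (LinearMap.id + A18 α us) (LinearMap.id - A18 α us)
    (by
      apply LinearMap.ext; intro x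
      simp only [LinearMap.comp_apply, LinearMap.add_apply, LinearMap.sub_apply,
        LinearMap.id_apply, map_sub, A18_sq]
      abel)
    (by
      apply LinearMap.ext; intro x
      simp only [LinearMap.comp_apply, LinearMap.add_apply, LinearMap.sub_apply,
        LinearMap.id_apply, map_add, A18_sq]
      abel)

/-- The affine transformation `γ : x ↦ x + Ax + v`. -/
def gamma18 (α : ℝ) (us : Fin 3 → ℝ) (v : V18) : V18 ≃ᵃ[ℝ] V18 :=
  (L18 α us).toAffineEquiv.trans (AffineEquiv.constVAdd ℝ V18 v)

/-- The translation `τ : x ↦ x + (t, 0)` by a vector of `U = ℝ³ × {0}`. -/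
def tau18 (t : Fin 3 → ℝ) : V18 ≃ᵃ[ℝ] V18 :=
  AffineEquiv.constVAdd ℝ V18 (t, 0)

/-- The isometry group of the form `form18`. -/
def Iso18 : Subgroup (V18 ≃ᵃ[ℝ] V18) where
  carrier := { γ | ∀ x y, form18 (γ.linear x) (γ.linear y) = form18 x y }
  one_mem' := by intro x y; rfl
  mul_mem' := by
    intro a b ha hb x y
    have h : (a * b).linear x = a.linear (b.linear x) := rfl
    have h' : (a * b).linear y = a.linear (b.linear y) := rfl
    rw [h, h', ha, hb]
  inv_mem' := by
    intro a ha x y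
    have h : a.linear ((a⁻¹).linear x) = x := a.linear.apply_symm_apply x
    have h' : a.linear ((a⁻¹).linear y) = y := a.linear.apply_symm_apply y
    calc form18 ((a⁻¹).linear x) ((a⁻¹).linear y)
        = form18 (a.linear ((a⁻¹).linear x)) (a.linear ((a⁻¹).linear y)) := (ha _ _).symm
      _ = form18 x y := by rw [h, h']


lemma gamma18_apply (α : ℝ) (us : Fin 3 → ℝ) (v x : V18) :
    gamma18 α us v x = v + (x + A18 α us x) := rfl

lemma gamma18_linear (α : ℝ) (us : Fin 3 → ℝ) (v x : V18) :
    (gamma18 α us v).linear x = x + A18 α us x := rfl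

lemma tau18_apply (tt : Fin 3 → ℝ) (x : V18) : tau18 tt x = (tt, 0) + x := rfl

lemma tau18_linear (tt : Fin 3 → ℝ) (x : V18) : (tau18 tt).linear x = x := rfl

lemma A18_apply (α : ℝ) (c : Fin 3 → ℝ) (x : V18) :
    A18 α c x = (α • (crossProduct c x.2), 0) := rfl

lemma cross_aux (c x y : Fin 3 → ℝ) :
    (crossProduct c x) ⬝ᵥ y + x ⬝ᵥ (crossProduct c y) = 0 := by
  simp [crossProduct, dotProduct, Fin.sum_univ_three]; ring

lemma gamma18_mem_Iso18 (α : ℝ) (us : Fin 3 → ℝ) (v : V18) :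
    gamma18 α us v ∈ Iso18 := by
  intro x y
  simp only [gamma18_linear, A18_apply, form18]
  have := cross_aux us x.2 y.2
  simp only [Prod.fst_add, Prod.snd_add, dotProduct_add, add_dotProduct,
    smul_dotProduct, dotProduct_smul, smul_eq_mul, dotProduct_zero, zero_dotProduct]
  linear_combination α * this

lemma tau18_mem_Iso18 (tt : Fin 3 → ℝ) : tau18 tt ∈ Iso18 := fun _ _ => rfl

lemma A18_snd_zero (α β : ℝ) (c : Fin 3 → ℝ) (y : Fin 3 → ℝ) :
    A18 α c (y, 0) = 0 := by simp [A18, Prod.ext_iff]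

lemma A18_A18' (α β : ℝ) (c d : Fin 3 → ℝ) (x : V18) :
    A18 α c (A18 β d x) = 0 := by simp [A18, Prod.ext_iff]

lemma A18_add (α : ℝ) (c d : Fin 3 → ℝ) (x : V18) :
    A18 α (c + d) x = A18 α c x + A18 α d x := by
  simp [A18, Prod.ext_iff, map_add, smul_add, LinearMap.add_apply]

lemma A18_zero (α : ℝ) (x : V18) : A18 α 0 x = 0 := by
  simp [A18, Prod.ext_iff]

lemma A18_neg (α : ℝ) (c : Fin 3 → ℝ) (x : V18) :
    A18 α (-c) x = - A18 α c x := by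
  have h : crossProduct (-c) = -(crossProduct c) := map_neg crossProduct c
  simp only [A18, LinearMap.coe_mk, AddHom.coe_mk, h, LinearMap.neg_apply,
    smul_neg, Prod.neg_mk, neg_zero]

lemma gamma18_comm (α : ℝ) (c d : Fin 3 → ℝ) (w v : V18)
    (h : A18 α c v = A18 α d w) :
    gamma18 α c w * gamma18 α d v = gamma18 α d v * gamma18 α c w := by
  apply DFunLike.ext
  intro x
  show gamma18 α c w (gamma18 α d v x) = gamma18 α d v (gamma18 α c w x)
  simp only [gamma18_apply, map_add, A18_A18', h]
  abel

lemma gamma18_tau18_comm (α : ℝ) (c : Fin 3 → ℝ) (w : V18) (tt : Fin 3 → ℝ) :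
    tau18 tt * gamma18 α c w = gamma18 α c w * tau18 tt := by
  apply DFunLike.ext
  intro x
  show tau18 tt (gamma18 α c w x) = gamma18 α c w (tau18 tt x)
  simp only [gamma18_apply, tau18_apply, map_add, A18_snd_zero α α]
  abel

lemma comm_special0 (α : ℝ) (d : Fin 3 → ℝ) (vv w : V18) (hvv : vv.2 = d) :
    gamma18 α d vv * gamma18 α (-w.2) w = gamma18 α (-w.2) w * gamma18 α d vv := by
  apply gamma18_comm
  have h1 : crossProduct (-w.2) = -(crossProduct w.2) := map_neg crossProduct w.2
  have h2 : -(crossProduct w.2 d) = crossProduct d w.2 := cross_anticomm w.2 d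
  simp only [A18, LinearMap.coe_mk, AddHom.coe_mk, hvv, h1, LinearMap.neg_apply,
    Prod.mk.injEq]
  refine ⟨?_, trivial⟩
  rw [cross_anticomm w.2 d]

lemma comm_special (α : ℝ) (d : Fin 3 → ℝ) (vv : V18) (hvv : vv.2 = d)
    (w1 w2 : Fin 3 → ℝ) :
    gamma18 α d vv * gamma18 α (-w2) (w1, w2) = gamma18 α (-w2) (w1, w2) * gamma18 α d vv :=
  comm_special0 α d vv (w1, w2) hvv

-- the transitivity witness maps p to q
lemma z_maps (α : ℝ) (p q : V18) :
    gamma18 α (-(q.2 - p.2)) (q.1 - p.1 + α • (crossProduct (q.2 - p.2) p.2), q.2 - p.2) p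
      = q := by
  have h1 : crossProduct (-(q.2 - p.2)) = -(crossProduct (q.2 - p.2)) :=
    map_neg crossProduct _
  simp only [gamma18_apply, A18, LinearMap.coe_mk, AddHom.coe_mk, h1,
    LinearMap.neg_apply, smul_neg]
  apply Prod.ext <;> simp <;> abel

def P18 (α : ℝ) (g : V18 ≃ᵃ[ℝ] V18) : Prop :=
  ∃ c : Fin 3 → ℝ, ∃ w : V18, w.2 = c ∧ ∀ x, g x = w + (x + A18 α c x)

lemma P18_one (α : ℝ) : P18 α 1 :=
  ⟨0, 0, rfl, fun x => by simp [A18_zero]⟩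

lemma P18_mul (α : ℝ) {g h : V18 ≃ᵃ[ℝ] V18} (hg : P18 α g) (hh : P18 α h) :
    P18 α (g * h) := by
  obtain ⟨c, w, hw, hgx⟩ := hg
  obtain ⟨d, u, hu, hhx⟩ := hh
  refine ⟨c + d, w + u + A18 α c u, ?_, ?_⟩
  · show w.2 + u.2 + (A18 α c u).2 = c + d
    have h0 : (A18 α c u).2 = 0 := rfl
    rw [h0, hw, hu, add_zero]
  · intro x
    show g (h x) = _
    rw [hhx, hgx]
    simp only [map_add, A18_A18' α α, A18_add]
    abel

lemma P18_inv (α : ℝ) {g : V18 ≃ᵃ[ℝ] V18} (hg : P18 α g) : P18 α g⁻¹ := by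
  obtain ⟨c, w, hw, hgx⟩ := hg
  refine ⟨-c, -w + A18 α c w, ?_, ?_⟩
  · show -w.2 + (A18 α c w).2 = -c
    have h0 : (A18 α c w).2 = 0 := rfl
    rw [h0, hw, add_zero]
  · intro x
    have h1 : g ((-w + A18 α c w) + (x + A18 α (-c) x)) = x := by
      rw [hgx]
      simp only [map_add, map_neg, A18_A18' α α, A18_neg]
      abel
    have h2 : g (g⁻¹ x) = x := by
      calc g (g⁻¹ x) = (g * g⁻¹) x := rfl
        _ = x := by rw [mul_inv_cancel]; rfl
    exact g.injective (by rw [h2, h1])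

set_option maxHeartbeats 1000000 in
/-- each `γⱼ` and each translation `τᵢ` by a vector of
`U = ℝ³ × {0}` is an isometry of the form, the centralizer of the group `Γ`
they generate acts transitively on `ℝ⁶`, and consequently `Γ` acts freely. -/
theorem homogeneous_from_heisenberg_data (α : ℝ) (hα : α ≠ 0)
    (r l : ℕ) (uu : Fin r → Fin 3 → ℝ) (us : Fin r → Fin 3 → ℝ)
    (v : Fin r → V18) (hv : ∀ j, v j = (uu j, us j))
    (t : Fin l → Fin 3 → ℝ) :
    (∀ j, gamma18 α (us j) (v j) ∈ Iso18) ∧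
    (∀ i, tau18 (t i) ∈ Iso18) ∧
    (∀ p q : V18, ∃ z ∈ Iso18 ⊓ Subgroup.centralizer
        ((Subgroup.closure ((Set.range fun j => gamma18 α (us j) (v j)) ∪
          (Set.range fun i => tau18 (t i))) : Subgroup _) : Set (V18 ≃ᵃ[ℝ] V18)),
      z p = q) ∧
    (∀ g ∈ Subgroup.closure ((Set.range fun j => gamma18 α (us j) (v j)) ∪
        (Set.range fun i => tau18 (t i))),
      (∃ x : V18, g x = x) → g = 1) := by
  have hvs : ∀ j, (v j).2 = us j := fun j => by rw [hv j]
  refine ⟨fun j => gamma18_mem_Iso18 α (us j) (v j), fun i => tau18_mem_Iso18 (t i), ?_, ?_⟩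
  · intro p q
    refine ⟨gamma18 α (-(q.2 - p.2))
        (q.1 - p.1 + α • (crossProduct (q.2 - p.2) p.2), q.2 - p.2),
      Subgroup.mem_inf.mpr ⟨gamma18_mem_Iso18 _ _ _, ?_⟩, z_maps α p q⟩
    rw [Subgroup.mem_centralizer_iff]
    intro h hh
    rw [SetLike.mem_coe] at hh
    refine Subgroup.closure_induction ?_ ?_ ?_ ?_ hh
    · rintro x (⟨j, rfl⟩ | ⟨i, rfl⟩)
      · exact comm_special α (us j) (v j) (hvs j) _ _
      · exact gamma18_tau18_comm α _ _ (t i)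
    · rw [one_mul, mul_one]
    · intro a b _ _ pa pb
      rw [mul_assoc, pb, ← mul_assoc, pa, mul_assoc]
    · intro a _ pa
      rw [eq_comm, mul_inv_eq_iff_eq_mul, mul_assoc, ← pa, ← mul_assoc,
        inv_mul_cancel, one_mul]
  · intro g hg hfix
    obtain ⟨x, hx⟩ := hfix
    have hP : P18 α g := by
      refine Subgroup.closure_induction ?_ (P18_one α) (fun a b _ _ => P18_mul α)
        (fun a _ => P18_inv α) hg
      rintro y (⟨j, rfl⟩ | ⟨i, rfl⟩)
      · exact ⟨us j, v j, hvs j, fun x => rfl⟩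
      · refine ⟨0, (t i, 0), rfl, fun x => ?_⟩
        rw [tau18_apply]
        simp [A18_zero]
    obtain ⟨c, w, hw, hgx⟩ := hP
    rw [hgx] at hx
    have h2 : w.2 + (x.2 + (A18 α c x).2) = x.2 := congrArg Prod.snd hx
    have hA0 : (A18 α c x).2 = 0 := rfl
    rw [hA0, add_zero] at h2
    have hw2 : w.2 = 0 := add_eq_right.mp h2
    have hc : c = 0 := by rw [← hw, hw2]
    rw [hc, A18_zero, add_zero] at hx
    have hwz : w = 0 := add_eq_right.mp hx
    apply DFunLike.ext
    intro y
    show g y = y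
    rw [hgx y, hc, A18_zero, add_zero, hwz, zero_add]


end
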